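/- Let G be a subgroup of ℚ and p a prime such that G is not divisible by p, i.e., G ≠ pG. Then for every n ≥ 1, the quotient group G/pⁿG is cyclic of order pⁿ, i.e., G/pⁿG ≅ ℤ/pⁿℤ. -/

import Mathlib

/-- The additive group endomorphism `x ↦ n • x`; its range is the subgroup `nG`. -/
def zsmulHom (A : Type*) [AddCommGroup A] (n : ℤ) : A →+ A :=
  AddMonoidHom.mk' (fun x => n • x) (fun x y => smul_add n x y)

/-- If a subgroup `G` of `ℚ` is not divisible by a prime `p`, then `G/pⁿG ≅ ℤ/pⁿℤ`. -/
theorem quotient_by_pow_smul_of_not_divisible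
    (G : AddSubgroup ℚ) (p : ℕ) (hp : p.Prime)
    (hdiv : (zsmulHom ↥G (p : ℤ)).range ≠ ⊤)
    (n : ℕ) (hn : 1 ≤ n) :
    Nonempty ((↥G ⧸ (zsmulHom ↥G ((p : ℤ) ^ n)).range) ≃+ ZMod (p ^ n)) := by
  have hpI : Prime (p : ℤ) := Nat.prime_iff_prime_int.mp hp
  obtain ⟨g, hg⟩ : ∃ g : ↥G, g ∉ (zsmulHom ↥G (p : ℤ)).range := by
    by_contra h
    push_neg at h
    exact hdiv ((AddSubgroup.eq_top_iff' _).mpr h)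
  -- key lemma C
  have hC : ∀ (m : ℤ) (y : ↥G), m • g = (p : ℤ) • y → (p : ℤ) ∣ m := by
    intro m y hmy
    by_contra hpm
    apply hg
    obtain ⟨v, u, huv⟩ := hpI.coprime_iff_not_dvd.mpr hpm  -- v * p + u * m = 1
    refine ⟨u • y + v • g, ?_⟩
    show (p : ℤ) • (u • y + v • g) = g
    calc (p : ℤ) • (u • y + v • g)
        = u • ((p:ℤ) • y) + v • ((p:ℤ) • g) := by module
      _ = (u * m + v * p) • g := by rw [← hmy]; module
      _ = g := by rw [add_comm (u*m), huv, one_smul]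
  have hg0 : (g : ℚ) ≠ 0 := by
    intro h0
    exact hg ⟨0, show (p : ℤ) • (0 : ↥G) = g by rw [smul_zero]; exact Subtype.ext h0.symm⟩
  -- lemma B : divisibility from membership
  have hB : ∀ (m : ℕ) (k : ℤ), (∃ y : ↥G, (p:ℤ)^m • y = k • g) → (p:ℤ)^m ∣ k := by
    intro m
    induction m with
    | zero => intro k _; simpa using one_dvd k
    | succ m ih =>
      intro k ⟨y, hy⟩
      have h1 : (p:ℤ)^m • ((p:ℤ) • y) = k • g := by
        rw [← mul_smul, ← pow_succ]; exact hy
      obtain ⟨k', hk'⟩ := ih k ⟨(p:ℤ) • y, h1⟩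
      have hv : ((p:ℤ)^(m+1)) • (y : ℚ) = k • (g : ℚ) := by
        exact_mod_cast congrArg Subtype.val hy
      rw [zsmul_eq_mul, zsmul_eq_mul, hk'] at hv
      push_cast at hv
      have hpm0 : ((p:ℚ))^m ≠ 0 := pow_ne_zero _ (by exact_mod_cast hp.ne_zero)
      have h2q : (k' : ℚ) * (g : ℚ) = (p : ℚ) * (y : ℚ) := by
        apply mul_left_cancel₀ hpm0
        linear_combination -hv
      have h2 : k' • g = (p : ℤ) • y := by
        apply Subtype.ext
        push_cast
        rw [zsmul_eq_mul, zsmul_eq_mul]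
        exact_mod_cast h2q
      obtain ⟨k'', hk''⟩ := hC k' y h2
      exact ⟨k'', by rw [hk', hk'', pow_succ]; ring⟩
  -- lemma A : generation
  have hA : ∀ x : ↥G, ∃ (k : ℤ) (y : ↥G), x = k • g + (p:ℤ)^n • y := by
    intro x
    set q : ℚ := (x : ℚ) / (g : ℚ) with hq
    set a : ℤ := q.num with ha
    set b : ℤ := (q.den : ℤ) with hb
    have hbx : b • x = a • g := by
      apply Subtype.ext
      push_cast
      rw [zsmul_eq_mul, zsmul_eq_mul]
      have hx : (x : ℚ) = q * (g : ℚ) := by rw [hq]; field_simp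
      have han : (a : ℚ) = q * (q.den : ℚ) := by
        rw [ha, Rat.mul_den_eq_num]
      rw [hx, han, hb]
      push_cast
      ring
    have hpb : ¬ (p:ℤ) ∣ b := by
      intro ⟨b', hb'⟩
      have h3 : a • g = (p:ℤ) • (b' • x) := by
        rw [← hbx, hb', mul_smul]
      have hpa : (p:ℤ) ∣ a := hC a (b' • x) h3
      have h4 : p ∣ q.num.natAbs := Int.natCast_dvd.mp hpa
      have h5 : p ∣ q.den := Int.natCast_dvd_natCast.mp (hb ▸ ⟨b', hb'⟩)
      have h6 := Nat.dvd_gcd h4 h5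
      rw [q.reduced] at h6
      exact hp.one_lt.ne' (Nat.dvd_one.mp h6)
    have hcop : IsCoprime ((p:ℤ)^n) b := (hpI.coprime_iff_not_dvd.mpr hpb).pow_left
    obtain ⟨u, v, huv⟩ := hcop
    refine ⟨v * a, u • x, ?_⟩
    calc x = (u * (p:ℤ)^n + v * b) • x := by rw [huv, one_smul]
      _ = v • (b • x) + (p:ℤ)^n • (u • x) := by module
      _ = (v * a) • g + (p:ℤ)^n • (u • x) := by rw [hbx, ← mul_smul]
  -- the homomorphism ℤ → G/pⁿG
  set H := (zsmulHom ↥G ((p : ℤ) ^ n)).range with hH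
  let φ : ℤ →+ ↥G ⧸ H := (QuotientAddGroup.mk' H).comp (zmultiplesHom ↥G g)
  have hφ : ∀ k : ℤ, φ k = QuotientAddGroup.mk (k • g) := fun k => rfl
  have hmemH : ∀ x : ↥G, x ∈ H ↔ ∃ y : ↥G, (p:ℤ)^n • y = x := by
    intro x; exact AddMonoidHom.mem_range
  have hsurj : Function.Surjective φ := by
    intro c
    obtain ⟨x, rfl⟩ := QuotientAddGroup.mk'_surjective H c
    obtain ⟨k, y, hky⟩ := hA x
    refine ⟨k, ?_⟩
    rw [hφ]
    show _ = QuotientAddGroup.mk x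
    rw [QuotientAddGroup.eq]
    refine (hmemH _).mpr ⟨y, ?_⟩
    rw [hky]; abel
  have hker : φ.ker = AddSubgroup.zmultiples (((p^n : ℕ)) : ℤ) := by
    ext k
    rw [AddMonoidHom.mem_ker, hφ, QuotientAddGroup.eq_zero_iff, hmemH,
      AddSubgroup.mem_zmultiples_iff]
    constructor
    · intro h
      obtain ⟨c, hc⟩ := hB n k h
      exact ⟨c, by rw [smul_eq_mul, hc]; push_cast; ring⟩
    · intro ⟨c, hc⟩
      refine ⟨c • g, ?_⟩
      rw [← mul_smul, ← hc, smul_eq_mul]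
      congr 1
      push_cast
      ring
  exact ⟨((QuotientAddGroup.quotientKerEquivOfSurjective φ hsurj).symm.trans
    (QuotientAddGroup.quotientAddEquivOfEq hker)).trans
    (Int.quotientZMultiplesNatEquivZMod (p^n))⟩
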